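/- For every integer k ≥ 1 and all real ε > 0 and δ > 0 there exists a constant C = C(k, ε, δ) such that for all integers N ≥ 2, the Lebesgue measure of the set of x ∈ [0,1] with I_{k,N}(x, N^{k+1}) ≥ N^ε is at most C · N^{−ε+δ}. -/
import Mathlib

open MeasureTheory

theorem zhao_conjecture_outside_small_set
    (k : ℕ) (hk : 1 ≤ k) (ε δ : ℝ) (hε : 0 < ε) (hδ : 0 < δ) :
    ∃ C : ℝ, 0 < C ∧ ∀ N : ℕ, 2 ≤ N →
      volume {x : ℝ | x ∈ Set.Icc (0 : ℝ) 1 ∧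
        (N : ℝ) ^ ε ≤
          (Nat.card {z : ℝ |
            (∃ n u : ℕ, 1 ≤ n ∧ n ≤ N ∧ 1 ≤ u ∧ u ≤ n ^ k ∧ Nat.gcd u n = 1 ∧
              z = (u : ℝ) / (n : ℝ) ^ k) ∧
            |(z - x) - (round (z - x) : ℝ)| ≤ 1 / (N : ℝ) ^ (k + 1)} : ℝ)}
      ≤ ENNReal.ofReal (C * (N : ℝ) ^ (-ε + δ)) := by
  classical
  refine ⟨4, by norm_num, fun N hN => ?_⟩
  have hNpos : (0:ℝ) < N := by positivity
  have hN1 : (1:ℝ) ≤ N := by exact_mod_cast hN.trans' (by norm_num)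
  set c : ℝ := 1 / (N : ℝ) ^ (k + 1) with hcdef
  have hYpos : (0:ℝ) < (N : ℝ) ^ (k + 1) := by positivity
  have hcpos : 0 < c := by positivity
  have hchalf : c ≤ 1 / 4 := by
    rw [hcdef, div_le_div_iff₀ hYpos (by norm_num)]
    have : (4:ℝ) ≤ (N:ℝ) ^ (k+1) := by
      calc (4:ℝ) = 2^2 := by norm_num
      _ ≤ (N:ℝ)^2 := by
          apply pow_le_pow_left₀ (by norm_num)
          exact_mod_cast hN
      _ ≤ (N:ℝ)^(k+1) := by
          apply pow_le_pow_right₀ (by exact_mod_cast hN.trans' (by norm_num))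
          omega
    linarith
  -- the family of intervals
  set A : ℝ → Set ℝ := fun z => ⋃ m : ℤ, Set.Icc (z - m - c) (z - m + c) with hAdef
  have hA_meas : ∀ z, MeasurableSet (A z) := fun z =>
    MeasurableSet.iUnion fun m => measurableSet_Icc
  have hA_mem : ∀ z x : ℝ, |(z - x) - (round (z - x) : ℝ)| ≤ c → x ∈ A z := by
    intro z x h
    refine Set.mem_iUnion.2 ⟨round (z - x), ?_⟩
    rw [abs_le] at h
    rw [Set.mem_Icc]
    constructor <;> linarith [h.1, h.2]
  have hA_vol : ∀ z : ℝ, volume (A z ∩ Set.Icc (0:ℝ) 1) ≤ ENNReal.ofReal (4 * c) := by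
    intro z
    set m0 : ℤ := ⌈z - 1 - c⌉ with hm0
    have hsub : A z ∩ Set.Icc (0:ℝ) 1 ⊆
        Set.Icc (z - m0 - c) (z - m0 + c) ∪
        Set.Icc (z - (m0 + 1) - c) (z - (m0 + 1) + c) := by
      rintro x ⟨hxA, hx0, hx1⟩
      obtain ⟨m, hm⟩ := Set.mem_iUnion.1 hxA
      have h1 : (m : ℝ) ≤ z + c := by
        have := hm.2; linarith
      have h2 : z - 1 - c ≤ (m : ℝ) := by
        have := hm.1; linarith
      have hm0le : m0 ≤ m := by
        rw [hm0]; exact Int.ceil_le.2 h2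
      have hmle : m ≤ m0 + 1 := by
        have hc0 : z - 1 - c ≤ (m0 : ℝ) := Int.le_ceil _
        have : (m : ℝ) < (m0 : ℝ) + 2 := by linarith
        have : m < m0 + 2 := by exact_mod_cast this
        omega
      have hcases : m = m0 ∨ m = m0 + 1 := by omega
      rw [Set.mem_Icc] at hm
      rcases hcases with h | h
      · left
        have hcast : (m : ℝ) = (m0 : ℝ) := by exact_mod_cast congrArg (Int.cast : ℤ → ℝ) h
        rw [Set.mem_Icc]
        constructor <;> linarith [hm.1, hm.2]
      · right
        have hcast : (m : ℝ) = (m0 : ℝ) + 1 := by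
          rw [h]; push_cast; ring
        rw [Set.mem_Icc]
        constructor <;> linarith [hm.1, hm.2]
    calc volume (A z ∩ Set.Icc (0:ℝ) 1) ≤ _ := measure_mono hsub
      _ ≤ volume (Set.Icc (z - m0 - c) (z - m0 + c)) +
          volume (Set.Icc (z - (m0 + 1) - c) (z - (m0 + 1) + c)) := measure_union_le _ _
      _ = ENNReal.ofReal (2 * c) + ENNReal.ofReal (2 * c) := by
          rw [Real.volume_Icc, Real.volume_Icc]; ring_nf
      _ = ENNReal.ofReal (4 * c) := by
          rw [← ENNReal.ofReal_add (by linarith) (by linarith)]; ring_nf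
  -- the finite superset of fractions
  set F : Finset ℝ := ((Finset.Icc 1 N) ×ˢ (Finset.Icc 1 (N ^ k))).image
    (fun p : ℕ × ℕ => (p.2 : ℝ) / (p.1 : ℝ) ^ k) with hFdef
  have hFcard : F.card ≤ N ^ (k + 1) := by
    calc F.card ≤ ((Finset.Icc 1 N) ×ˢ (Finset.Icc 1 (N ^ k))).card :=
          Finset.card_image_le
      _ = N * N ^ k := by
          rw [Finset.card_product, Nat.card_Icc, Nat.card_Icc]; simp
      _ = N ^ (k + 1) := by ring
  set f : ℝ → ENNReal := fun x => ∑ z ∈ F, (A z).indicator (fun _ => (1:ENNReal)) x with hfdef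
  have hf_meas : Measurable f :=
    Finset.measurable_sum _ fun z _ => measurable_const.indicator (hA_meas z)
  set μ : Measure ℝ := volume.restrict (Set.Icc (0:ℝ) 1) with hμdef
  -- f x equals card of filter
  have hf_eq : ∀ x : ℝ, f x = ((F.filter (fun z => x ∈ A z)).card : ENNReal) := by
    intro x
    rw [hfdef]
    simp only [Set.indicator_apply]
    rw [Finset.sum_boole]
  -- pointwise bound: count ≤ f
  set S : Set ℝ := {x : ℝ | x ∈ Set.Icc (0 : ℝ) 1 ∧
        (N : ℝ) ^ ε ≤
          (Nat.card {z : ℝ |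
            (∃ n u : ℕ, 1 ≤ n ∧ n ≤ N ∧ 1 ≤ u ∧ u ≤ n ^ k ∧ Nat.gcd u n = 1 ∧
              z = (u : ℝ) / (n : ℝ) ^ k) ∧
            |(z - x) - (round (z - x) : ℝ)| ≤ 1 / (N : ℝ) ^ (k + 1)} : ℝ)} with hSdef
  have hS_sub : S ⊆ {x : ℝ | ENNReal.ofReal ((N:ℝ) ^ ε) ≤ f x} := by
    intro x hx
    obtain ⟨hx01, hxcount⟩ := hx
    set T : Set ℝ := {z : ℝ |
            (∃ n u : ℕ, 1 ≤ n ∧ n ≤ N ∧ 1 ≤ u ∧ u ≤ n ^ k ∧ Nat.gcd u n = 1 ∧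
              z = (u : ℝ) / (n : ℝ) ^ k) ∧
            |(z - x) - (round (z - x) : ℝ)| ≤ 1 / (N : ℝ) ^ (k + 1)} with hTdef
    have hT_sub : T ⊆ ↑(F.filter (fun z => x ∈ A z)) := by
      rintro z ⟨⟨n, u, hn1, hnN, hu1, hunk, _, hz⟩, hcond⟩
      rw [Finset.mem_coe, Finset.mem_filter]
      refine ⟨?_, hA_mem z x hcond⟩
      rw [hFdef, Finset.mem_image]
      refine ⟨⟨n, u⟩, ?_, hz.symm⟩
      simp only [Finset.mem_product, Finset.mem_Icc]
      exact ⟨⟨hn1, hnN⟩, ⟨hu1, hunk.trans (Nat.pow_le_pow_left hnN k)⟩⟩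
    have hTcard : Nat.card T ≤ (F.filter (fun z => x ∈ A z)).card := by
      rw [Nat.card_coe_set_eq]
      calc T.ncard ≤ (↑(F.filter (fun z => x ∈ A z)) : Set ℝ).ncard :=
            Set.ncard_le_ncard hT_sub (Finset.finite_toSet _)
        _ = _ := Set.ncard_coe_finset _
    rw [Set.mem_setOf_eq, hf_eq x]
    calc ENNReal.ofReal ((N:ℝ) ^ ε) ≤ ENNReal.ofReal ((Nat.card T : ℝ)) :=
          ENNReal.ofReal_le_ofReal hxcount
      _ = (Nat.card T : ENNReal) := ENNReal.ofReal_natCast _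
      _ ≤ _ := by exact_mod_cast hTcard
  -- integral bound
  have hint : ∫⁻ x, f x ∂μ ≤ ENNReal.ofReal 4 := by
    simp only [hfdef]
    rw [lintegral_finset_sum _ (fun z _ => measurable_const.indicator (hA_meas z))]
    have hstep : ∀ z ∈ F, ∫⁻ x, (A z).indicator (fun _ => (1:ENNReal)) x ∂μ ≤ ENNReal.ofReal (4 * c) := by
      intro z _
      rw [lintegral_indicator_const (hA_meas z) 1, one_mul, hμdef,
        Measure.restrict_apply (hA_meas z)]
      exact hA_vol z
    calc ∑ z ∈ F, ∫⁻ x, (A z).indicator (fun _ => (1:ENNReal)) x ∂μ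
        ≤ ∑ _z ∈ F, ENNReal.ofReal (4 * c) := Finset.sum_le_sum hstep
      _ = F.card * ENNReal.ofReal (4 * c) := by
          rw [Finset.sum_const, nsmul_eq_mul]
      _ ≤ (N ^ (k+1) : ℕ) * ENNReal.ofReal (4 * c) := by
          gcongr
      _ = ENNReal.ofReal (((N ^ (k+1) : ℕ) : ℝ) * (4 * c)) := by
          rw [← ENNReal.ofReal_natCast (N ^ (k+1)),
            ← ENNReal.ofReal_mul (by positivity)]
      _ = ENNReal.ofReal 4 := by
          congr 1
          rw [hcdef]
          push_cast
          field_simp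
  -- Markov
  have hmarkov := mul_meas_ge_le_lintegral₀ hf_meas.aemeasurable
    (μ := μ) (ENNReal.ofReal ((N:ℝ) ^ ε))
  have hμS : volume S = μ S := by
    have hSI : S ∩ Set.Icc (0:ℝ) 1 = S := Set.inter_eq_left.2 (fun x hx => hx.1)
    rw [hμdef, Measure.restrict_apply' measurableSet_Icc, hSI]
  have hrpow_pos : (0:ℝ) < (N:ℝ) ^ ε := Real.rpow_pos_of_pos hNpos ε
  have hkey : ENNReal.ofReal ((N:ℝ) ^ ε) * volume S ≤ ENNReal.ofReal 4 := by
    rw [hμS]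
    calc ENNReal.ofReal ((N:ℝ) ^ ε) * μ S
        ≤ ENNReal.ofReal ((N:ℝ) ^ ε) * μ {x | ENNReal.ofReal ((N:ℝ) ^ ε) ≤ f x} :=
          mul_le_mul_right (measure_mono hS_sub) _
      _ ≤ ∫⁻ x, f x ∂μ := hmarkov
      _ ≤ ENNReal.ofReal 4 := hint
  have hdiv : volume S ≤ ENNReal.ofReal (4 / (N:ℝ) ^ ε) := by
    rw [ENNReal.ofReal_div_of_pos hrpow_pos]
    rw [ENNReal.le_div_iff_mul_le (Or.inl (by positivity)) (Or.inl ENNReal.ofReal_ne_top)]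
    rw [mul_comm]
    exact hkey
  refine hdiv.trans (ENNReal.ofReal_le_ofReal ?_)
  have h1 : (4:ℝ) / (N:ℝ) ^ ε = 4 * (N:ℝ) ^ (-ε) := by
    rw [Real.rpow_neg hNpos.le]
    ring
  have h2 : (N:ℝ) ^ (-ε + δ) = (N:ℝ) ^ (-ε) * (N:ℝ) ^ δ := Real.rpow_add hNpos _ _
  have h3 : (1:ℝ) ≤ (N:ℝ) ^ δ := Real.one_le_rpow hN1 hδ.le
  have h4 : (0:ℝ) < (N:ℝ) ^ (-ε) := Real.rpow_pos_of_pos hNpos _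
  rw [h1, h2]
  nlinarith
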